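/- If a point set S is a ρ-saturating set of PG(n,q) with ρ ≤ n, then |S| > ((ρ+1)/e) · q^((n-ρ)/(ρ+1)) + ρ/2, where e is Euler's number. -/

import Mathlib

open Finset in
lemma sum_range_cast_real (k : ℕ) : ∑ i ∈ range k, (i : ℝ) = k * (k - 1) / 2 := by
  induction k with
  | zero => simp
  | succ m ih => rw [Finset.sum_range_succ, ih]; push_cast; ring

open Finset in
lemma fact_bound (k : ℕ) (hk : 1 ≤ k) :
    ((k : ℝ) / Real.exp 1) ^ k < (k.factorial : ℝ) := by
  have hkpos : (0 : ℝ) < k := by exact_mod_cast hk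
  have hfac : (0:ℝ) < k.factorial := by exact_mod_cast k.factorial_pos
  have h1 : (k:ℝ)^k / k.factorial + (k:ℝ)^(k+1)/((k+1).factorial) ≤ Real.exp k := by
    calc (k:ℝ)^k / k.factorial + (k:ℝ)^(k+1)/((k+1).factorial)
        ≤ ∑ i ∈ range (k+2), (k:ℝ)^i / i.factorial := by
          rw [Finset.sum_range_succ, Finset.sum_range_succ]
          have : (0:ℝ) ≤ ∑ i ∈ range k, (k:ℝ)^i / i.factorial :=
            Finset.sum_nonneg fun i _ => by positivity
          linarith
      _ ≤ Real.exp k := Real.sum_le_exp_of_nonneg (le_of_lt hkpos) _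
  have h2 : (k:ℝ)^k / k.factorial < Real.exp k := by
    have : (0:ℝ) < (k:ℝ)^(k+1)/((k+1).factorial) := by positivity
    linarith
  have hek : Real.exp 1 ^ k = Real.exp k := by
    rw [← Real.exp_nat_mul]; norm_num
  rw [div_pow, hek, div_lt_iff₀ (Real.exp_pos _)]
  rw [div_lt_iff₀ hfac] at h2
  linarith [h2]

open Finset in
lemma desc_bound (s k : ℕ) (hks : k ≤ s) :
    (s.descFactorial k : ℝ) ≤ ((s:ℝ) - ((k:ℝ)-1)/2)^k := by
  rcases Nat.eq_zero_or_pos k with hk | hk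
  · subst hk; simp
  have hznn : ∀ i ∈ range k, 0 ≤ (s:ℝ) - i := by
    intro i hi
    have h1 : (i:ℝ) < k := by exact_mod_cast Finset.mem_range.mp hi
    have h2 : (k:ℝ) ≤ s := by exact_mod_cast hks
    linarith
  have hcast : (s.descFactorial k : ℝ) = ∏ i ∈ range k, ((s:ℝ) - i) := by
    rw [Nat.descFactorial_eq_prod_range, Nat.cast_prod]
    refine Finset.prod_congr rfl fun i hi => ?_
    have hi' : i ≤ s := le_trans (le_of_lt (Finset.mem_range.mp hi)) hks
    rw [Nat.cast_sub hi']
  have hamgm := Real.geom_mean_le_arith_mean_weighted (range k)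
    (fun _ => (k:ℝ)⁻¹) (fun i => (s:ℝ) - i)
    (fun i _ => by positivity)
    (by
      simp only [Finset.sum_const, Finset.card_range, nsmul_eq_mul]
      field_simp)
    hznn
  have hsum : ∑ i ∈ range k, (k:ℝ)⁻¹ * ((s:ℝ) - i) = (s:ℝ) - ((k:ℝ)-1)/2 := by
    rw [← Finset.mul_sum, Finset.sum_sub_distrib, Finset.sum_const, Finset.card_range,
      sum_range_cast_real, nsmul_eq_mul]
    have hk0 : (k:ℝ) ≠ 0 := by positivity
    field_simp
  rw [hsum] at hamgm
  have hL : (∏ i ∈ range k, ((s:ℝ) - i) ^ ((k:ℝ)⁻¹)) ^ k = ∏ i ∈ range k, ((s:ℝ) - i) := by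
    rw [← Finset.prod_pow]
    refine Finset.prod_congr rfl fun i hi => ?_
    exact Real.rpow_inv_natCast_pow (hznn i hi) (by omega)
  have hLnn : 0 ≤ ∏ i ∈ range k, ((s:ℝ) - i) ^ ((k:ℝ)⁻¹) :=
    Finset.prod_nonneg fun i hi => Real.rpow_nonneg (hznn i hi) _
  calc (s.descFactorial k : ℝ) = (∏ i ∈ range k, ((s:ℝ) - i) ^ ((k:ℝ)⁻¹))^k := by
        rw [hL, hcast]
    _ ≤ ((s:ℝ) - ((k:ℝ)-1)/2)^k := pow_le_pow_left₀ hLnn hamgm k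

def spanOfFinset (F : Type*) [Field F] {V : Type*} [AddCommGroup V] [Module F V]
    (T : Finset (Projectivization F V)) : Submodule F V :=
  Submodule.span F (Projectivization.rep '' (T : Set (Projectivization F V)))

lemma mem_of_rep_mem {F V : Type*} [Field F] [AddCommGroup V] [Module F V]
    (v : V) (hv : v ≠ 0) (W : Submodule F V)
    (h : (Projectivization.mk F v hv).rep ∈ W) : v ∈ W := by
  obtain ⟨a, ha⟩ := (Projectivization.mk_eq_mk_iff F _ _
    (Projectivization.rep_nonzero _) hv).1 (Projectivization.mk_rep _)
  rw [← ha] at h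
  exact (W.smul_mem_iff' a).1 h

/-- A point set `S` of `PG(n,q)` (modelled as the projectivization of `F^(n+1)` for a
finite field `F` of order `q`) `ρ`-saturates every point: each point lies in a subspace
spanned by at most `ρ+1` points of `S` (i.e. of projective dimension at most `ρ`). -/
def Saturates (F : Type*) [Field F] {V : Type*} [AddCommGroup V] [Module F V]
    (ρ : ℕ) (S : Set (Projectivization F V)) : Prop :=
  ∀ P : Projectivization F V, ∃ T : Finset (Projectivization F V),
    ↑T ⊆ S ∧ T.card ≤ ρ + 1 ∧
      P.rep ∈ Submodule.span F (Projectivization.rep '' (↑T : Set (Projectivization F V)))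

/-- If `S` is a `ρ`-saturating set of `PG(n,q)` with `ρ ≤ n`, then
`|S| > ((ρ+1)/e) · q^((n-ρ)/(ρ+1)) + ρ/2`. -/
theorem stmt3 (F : Type*) [Field F] [Fintype F] (n ρ : ℕ) (hρn : ρ ≤ n)
    (S : Set (Projectivization F (Fin (n + 1) → F))) (hS : Saturates F ρ S) :
    ((ρ : ℝ) + 1) / Real.exp 1 *
        (Fintype.card F : ℝ) ^ (((n : ℝ) - ρ) / ((ρ : ℝ) + 1)) + (ρ : ℝ) / 2
      < (S.ncard : ℝ) := by
  classical
  set q := Fintype.card F with hq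
  have hq2 : 2 ≤ q := Fintype.one_lt_card
  haveI : Finite (Projectivization F (Fin (n + 1) → F)) :=
    (Quotient.finite _ : Finite (Quotient (projectivizationSetoid F (Fin (n + 1) → F))))
  have hfin : S.Finite := Set.toFinite S
  set S' := hfin.toFinset with hS'def
  set k := ρ + 1 with hkdef
  -- ambient dimension
  have hcardV : Fintype.card (Fin (n+1) → F) = q ^ (n+1) := by
    rw [Fintype.card_fun, Fintype.card_fin]
  -- step A: S'.card ≥ n+1
  have hcard1 : n + 1 ≤ S'.card := by
    have hsub : ∀ v : Fin (n+1) → F,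
        v ∈ Submodule.span F (Projectivization.rep '' S) := by
      intro v
      by_cases hv : v = 0
      · subst hv; exact Submodule.zero_mem _
      · obtain ⟨T, hTS, _, hrep⟩ := hS (Projectivization.mk F v hv)
        have hmono : Submodule.span F (Projectivization.rep '' (T : Set _)) ≤
            Submodule.span F (Projectivization.rep '' S) :=
          Submodule.span_mono (Set.image_mono hTS)
        exact mem_of_rep_mem v hv _ (hmono hrep)
    have htop : Submodule.span F (Projectivization.rep '' S) = ⊤ :=
      eq_top_iff.2 fun v _ => hsub v
    have himg : Projectivization.rep '' S = ↑(S'.image Projectivization.rep) := by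
      rw [Finset.coe_image, hfin.coe_toFinset]
    have h2 := finrank_span_finset_le_card (R := F) (S'.image Projectivization.rep)
    unfold Set.finrank at h2
    rw [← himg, htop, finrank_top] at h2
    have h1 : Module.finrank F (Fin (n+1) → F) = n+1 := Module.finrank_fin_fun F
    rw [h1] at h2
    exact le_trans h2 Finset.card_image_le
  have hk_le : k ≤ S'.card := by omega
  -- step B: counting
  set P := Finset.powersetCard k S' with hPdef
  have hcover : ∀ v : Fin (n+1) → F, v ≠ 0 → ∃ T' ∈ P, v ∈ spanOfFinset F T' := by
    intro v hv
    obtain ⟨T, hTS, hTc, hrep⟩ := hS (Projectivization.mk F v hv)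
    have hTS' : T ⊆ S' := by
      intro x hx; rw [hS'def, Set.Finite.mem_toFinset]; exact hTS hx
    obtain ⟨T', hTT', hT'S, hT'c⟩ := Finset.exists_subsuperset_card_eq hTS' hTc hk_le
    refine ⟨T', Finset.mem_powersetCard.2 ⟨hT'S, hT'c⟩, ?_⟩
    have hmono : spanOfFinset F T ≤ spanOfFinset F T' :=
      Submodule.span_mono (Set.image_mono hTT')
    exact mem_of_rep_mem v hv _ (hmono hrep)
  have hbucket : ∀ T' ∈ P,
      (Finset.univ.filter (fun v : Fin (n+1) → F => v ∈ spanOfFinset F T')).card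
        ≤ q ^ k := by
    intro T' hT'
    have hc : (Finset.univ.filter
          (fun v : Fin (n+1) → F => v ∈ spanOfFinset F T')).card
        = Fintype.card ↥(spanOfFinset F T') :=
      (Fintype.card_subtype _).symm
    rw [hc, Module.card_eq_pow_finrank (K := F)]
    apply pow_le_pow_right₀ (by omega : 1 ≤ q)
    have himg : Projectivization.rep ''
          ((T' : Set (Projectivization F (Fin (n+1) → F)))) =
        ↑(T'.image Projectivization.rep) := Finset.coe_image.symm
    show Module.finrank F ↥(spanOfFinset F T') ≤ k
    unfold spanOfFinset
    rw [himg]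
    refine le_trans (finrank_span_finset_le_card _) (le_trans Finset.card_image_le ?_)
    rw [(Finset.mem_powersetCard.1 hT').2]
  have hcount : q^(n+1) - 1 ≤ P.card * q^k := by
    have hA : (Finset.univ.erase (0 : Fin (n+1) → F)) ⊆
        P.biUnion (fun T' => Finset.univ.filter (fun v => v ∈ spanOfFinset F T')) := by
      intro v hv
      obtain ⟨T', hT'P, hmem⟩ := hcover v (Finset.ne_of_mem_erase hv)
      exact Finset.mem_biUnion.2 ⟨T', hT'P,
        Finset.mem_filter.2 ⟨Finset.mem_univ _, hmem⟩⟩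
    calc q^(n+1) - 1 = (Finset.univ.erase (0 : Fin (n+1) → F)).card := by
          rw [Finset.card_erase_of_mem (Finset.mem_univ _), Finset.card_univ, hcardV]
      _ ≤ _ := Finset.card_le_card hA
      _ ≤ ∑ T' ∈ P, (Finset.univ.filter (fun v => v ∈ spanOfFinset F T')).card :=
        Finset.card_biUnion_le
      _ ≤ ∑ _T' ∈ P, q^k := Finset.sum_le_sum hbucket
      _ = P.card * q^k := by rw [Finset.sum_const, smul_eq_mul]
  have hchoose : q ^ (n - ρ) ≤ S'.card.choose k := by
    by_contra h
    push_neg at h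
    rw [← Finset.card_powersetCard, ← hPdef] at h
    have h1 : (P.card + 1) * q^k ≤ q^(n-ρ) * q^k := Nat.mul_le_mul_right _ h
    have h2 : q^(n-ρ) * q^k = q^(n+1) := by rw [← pow_add]; congr 1; omega
    have hqk : 2 ≤ q^k := le_trans hq2 (Nat.le_self_pow (by omega) q)
    have h4 : (P.card+1)*q^k = P.card*q^k + q^k := by ring
    omega
  -- step C: analytic
  set s := S'.card with hsdef
  have hncard : S.ncard = s := Set.ncard_eq_toFinset_card S hfin
  rw [hncard]
  have hk1 : 1 ≤ k := by omega
  have hfacpos : (0:ℝ) < k.factorial := by exact_mod_cast k.factorial_pos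
  have hqR : (0:ℝ) < (q:ℝ) := by positivity
  have e1 : ((q:ℝ))^(n-ρ) * (k.factorial:ℝ) ≤ ((s:ℝ) - ((k:ℝ)-1)/2)^k := by
    have hd := desc_bound s k hk_le
    have hid : (s.descFactorial k : ℝ) = (k.factorial:ℝ) * (s.choose k:ℝ) := by
      exact_mod_cast Nat.descFactorial_eq_factorial_mul_choose s k
    have hcc : ((q:ℝ))^(n-ρ) ≤ (s.choose k : ℝ) := by exact_mod_cast hchoose
    calc ((q:ℝ))^(n-ρ) * (k.factorial:ℝ) ≤ (s.choose k : ℝ) * (k.factorial:ℝ) :=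
          mul_le_mul_of_nonneg_right hcc hfacpos.le
      _ = (s.descFactorial k : ℝ) := by rw [hid]; ring
      _ ≤ _ := hd
  have hkm1 : ((k:ℝ)-1)/2 = (ρ:ℝ)/2 := by rw [hkdef]; push_cast; ring
  set m := (s:ℝ) - (ρ:ℝ)/2 with hmdef
  have hm : 0 < m := by
    have : (k:ℝ) ≤ s := by exact_mod_cast hk_le
    rw [hmdef, hkdef] at *
    push_cast at this ⊢
    linarith
  have e2 : ((q:ℝ))^(n-ρ) * ((k:ℝ)/Real.exp 1)^k < m ^ k := by
    calc ((q:ℝ))^(n-ρ) * ((k:ℝ)/Real.exp 1)^k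
        < ((q:ℝ))^(n-ρ) * (k.factorial:ℝ) :=
          mul_lt_mul_of_pos_left (fact_bound k hk1) (by positivity)
      _ ≤ ((s:ℝ) - ((k:ℝ)-1)/2)^k := e1
      _ = m ^ k := by rw [hkm1]
  have hkR : (0:ℝ) < (k:ℝ) := by exact_mod_cast hk1
  have e3 : ((q:ℝ))^(n-ρ) < (m * Real.exp 1 / k)^k := by
    have hrw : (m * Real.exp 1 / (k:ℝ))^k = m^k * (Real.exp 1)^k / (k:ℝ)^k := by
      rw [div_pow, mul_pow]
    rw [hrw, lt_div_iff₀ (by positivity)]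
    rw [div_pow, ← mul_div_assoc] at e2
    exact (div_lt_iff₀ (by positivity : (0:ℝ) < (Real.exp 1)^k)).mp e2
  have e4 : ((q:ℝ))^(((n:ℝ)-ρ)/((ρ:ℝ)+1)) < m * Real.exp 1 / k := by
    have hB : 0 < m * Real.exp 1 / (k:ℝ) := by positivity
    have hroot := Real.rpow_lt_rpow (by positivity) e3
      (by positivity : (0:ℝ) < ((k:ℝ))⁻¹)
    rw [Real.pow_rpow_inv_natCast hB.le (by omega)] at hroot
    rw [← Real.rpow_natCast (q:ℝ) (n-ρ), ← Real.rpow_mul hqR.le] at hroot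
    have hexp : ((n-ρ:ℕ):ℝ) * ((k:ℝ))⁻¹ = ((n:ℝ)-ρ)/((ρ:ℝ)+1) := by
      rw [Nat.cast_sub hρn, hkdef]
      push_cast
      rw [div_eq_mul_inv]
    rwa [hexp] at hroot
  have e5 : ((k:ℝ)/Real.exp 1) * ((q:ℝ))^(((n:ℝ)-ρ)/((ρ:ℝ)+1)) < m := by
    have hpos : (0:ℝ) < (k:ℝ)/Real.exp 1 := by positivity
    have := mul_lt_mul_of_pos_left e4 hpos
    have hsimp : ((k:ℝ)/Real.exp 1) * (m * Real.exp 1 / (k:ℝ)) = m := by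
      field_simp
    linarith [hsimp ▸ this]
  have hkcast : (k:ℝ) = (ρ:ℝ) + 1 := by rw [hkdef]; push_cast; ring
  rw [hkcast] at e5
  rw [hmdef] at e5
  linarith
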